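/- For all real x with 0 < x < 1, we have 1/x - 1 < -1/ln(1-x) < 1/x. -/

import Mathlib

theorem stmt_0 (x : ℝ) (h1 : 0 < x) (h2 : x < 1) :
    1 / x - 1 < -(1 / Real.log (1 - x)) ∧ -(1 / Real.log (1 - x)) < 1 / x := by
  have hy : 0 < 1 - x := by linarith
  have hne : (1 : ℝ) - x ≠ 1 := by intro h; linarith [sub_eq_self.mp h]
  have hub : Real.log (1 - x) < -x := by
    have := Real.log_lt_sub_one_of_pos hy hne
    linarith
  have hlb : -(x / (1 - x)) < Real.log (1 - x) := by
    have h := Real.log_lt_sub_one_of_pos (x := (1 - x)⁻¹) (by positivity)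
      (fun h => hne (inv_eq_one.mp h))
    rw [Real.log_inv] at h
    have : (1 - x)⁻¹ - 1 = x / (1 - x) := by field_simp; ring
    linarith [this ▸ h]
  set l := Real.log (1 - x) with hl
  have hl0 : l < 0 := by linarith
  have hL : x < -l := by linarith
  have hL2 : -l < x / (1 - x) := by linarith
  have hLpos : 0 < -l := by linarith
  have heq : -(1 / l) = 1 / (-l) := (div_neg (a := 1) (b := l)).symm
  constructor
  · have hlm : (-l) * (1 - x) < x := (lt_div_iff₀ hy).mp hL2
    have h2' : (1 - x) / x < 1 / (-l) := by
      rw [div_lt_div_iff₀ h1 hLpos]; nlinarith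
    have hx' : 1 / x - 1 = (1 - x) / x := by field_simp
    rw [heq, hx']; exact h2'
  · rw [heq]
    exact one_div_lt_one_div_of_lt h1 hL
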